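/- arXiv:1504.00499 — 6 statements merged into one kernel-verified Lean document; each statement's English description precedes it below -/
import Mathlib

section
/- For data y ∈ ℝ^N, nonnegative weights w ∈ ℝ^N, and α > 0, the minimum of the L1-TV functional T(x) = α Σ_{n=1}^{N-1} |x_n − x_{n+1}| + Σ_{n=1}^N w_n |x_n − y_n| over all x ∈ ℝ^N equals the minimum over x ∈ V^N, where V = Val(y) is the (finite) set of values attained by y. In particular there exists a global minimizer all of whose entries are values of the data. -/
open Finset

/-- Moving `u` towards `c` (with `u` between `t` and `c`) decreases `|· - c|`. -/
lemma l1tv_abs_mono_aux {t u c : ℝ} (h : (t ≤ u ∧ u ≤ c) ∨ (c ≤ u ∧ u ≤ t)) :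
    |u - c| ≤ |t - c| := by
  rcases h with ⟨h1, h2⟩ | ⟨h1, h2⟩
  · rw [abs_of_nonpos (by linarith), abs_of_nonpos (by linarith)]; linarith
  · rw [abs_of_nonneg (by linarith), abs_of_nonneg (by linarith)]; linarith

/-- `t ↦ |t - c|` is affine on an interval `[p,q]` not containing `c` in its interior. -/
lemma l1tv_kink_aff {p q t c : ℝ} (hpq : p < q) (hpt : p ≤ t) (htq : t ≤ q)
    (hc : c ≤ p ∨ q ≤ c) :
    |t - c| = (1 - (t - p)/(q - p)) * |p - c| + (t - p)/(q - p) * |q - c| := by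
  have hq : q - p ≠ 0 := by linarith
  rcases hc with h | h
  · rw [abs_of_nonneg (by linarith), abs_of_nonneg (by linarith), abs_of_nonneg (by linarith)]
    field_simp
    ring
  · rw [abs_of_nonpos (by linarith), abs_of_nonpos (by linarith), abs_of_nonpos (by linarith)]
    field_simp
    ring

/-- The univariate `L¹`-TV functional for real-valued data `y`, weights `w`
and regularization parameter `α`. -/
noncomputable def l1tvReal (N : ℕ) (α : ℝ) (w y : Fin N → ℝ) (x : Fin N → ℝ) : ℝ :=
  α * ∑ i : Fin (N - 1),
      |x ⟨i, by have := i.isLt; omega⟩ - x ⟨(i : ℕ) + 1, by have := i.isLt; omega⟩| +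
    ∑ n, w n * |x n - y n|

/-- Search-space reduction for real-valued `L¹`-TV: there is a global minimizer over all of
`ℝ^N` whose entries all belong to `Val(y)`; in particular the minimum over `ℝ^N` equals the
minimum over `V^N` with `V = Val(y)`. -/
theorem l1tv_real_min_attained_on_data_values
    (N : ℕ) (hN : 1 ≤ N) (y w : Fin N → ℝ) (hw : ∀ n, 0 ≤ w n) (α : ℝ) (hα : 0 < α) :
    ∃ x' : Fin N → ℝ, (∀ n, x' n ∈ Set.range y) ∧
      ∀ x : Fin N → ℝ, l1tvReal N α w y x' ≤ l1tvReal N α w y x := by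
  classical
  set Vfin : Finset ℝ := Finset.univ.image y with hV
  have hVy : ∀ n, y n ∈ Vfin := fun n => Finset.mem_image_of_mem y (Finset.mem_univ n)
  have hVne : Vfin.Nonempty := ⟨y ⟨0, hN⟩, hVy _⟩
  -- Step: replace one non-data value of `x` by a value from `Vfin ∪ (other values of x)`.
  have step : ∀ (x : Fin N → ℝ) (v : ℝ), v ∉ Vfin →
      ∃ x₂ : Fin N → ℝ,
        ((Finset.univ.image x₂) \ Vfin) ⊆ ((Finset.univ.image x) \ Vfin).erase v ∧
        l1tvReal N α w y x₂ ≤ l1tvReal N α w y x := by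
    intro x v hv
    set K : Finset ℝ := Vfin ∪ (Finset.univ.image x).erase v with hK
    have hKne : K.Nonempty := hVne.mono Finset.subset_union_left
    have hvK : v ∉ K := by
      intro h
      rcases Finset.mem_union.1 h with h | h
      · exact hv h
      · exact (Finset.mem_erase.1 h).1 rfl
    have hxK : ∀ n, x n = v ∨ x n ∈ K := by
      intro n
      by_cases h : x n = v
      · exact Or.inl h
      · exact Or.inr (Finset.mem_union_right _ (Finset.mem_erase.2
          ⟨h, Finset.mem_image_of_mem x (Finset.mem_univ n)⟩))
    have hyK : ∀ n, y n ∈ K := fun n => Finset.mem_union_left _ (hVy n)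
    have hyv : ∀ n, y n ≠ v := fun n h => hv (h ▸ hVy n)
    -- the substitution map and one-parameter family
    set S : ℝ → ℝ → ℝ := fun t c => if c = v then t else c with hS
    set g : ℝ → ℝ := fun t => l1tvReal N α w y (fun n => S t (x n)) with hg
    have hgv : g v = l1tvReal N α w y x := by
      simp only [hg]
      congr 1
      funext n
      simp only [hS]
      split <;> simp_all
    -- generic comparison of g at another point against g v
    have gle : ∀ u : ℝ,
        (∀ a b : ℝ, (a = v ∨ a ∈ K) → (b = v ∨ b ∈ K) → |S u a - S u b| ≤ |S v a - S v b|) →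
        g u ≤ g v := by
      intro u key
      have keyy : ∀ n : Fin N, |S u (x n) - y n| ≤ |S v (x n) - y n| := by
        intro n
        have e1 : (y n : ℝ) = S u (y n) := by simp [hS, hyv n]
        have e2 : (y n : ℝ) = S v (y n) := by simp [hS, hyv n]
        calc |S u (x n) - y n| = |S u (x n) - S u (y n)| := by rw [← e1]
          _ ≤ |S v (x n) - S v (y n)| := key _ _ (hxK n) (Or.inr (hyK n))
          _ = |S v (x n) - y n| := by rw [← e2]
      simp only [hg, l1tvReal]
      exact add_le_add
        (mul_le_mul_of_nonneg_left
          (Finset.sum_le_sum fun i _ => key _ _ (hxK _) (hxK _)) hα.le)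
        (Finset.sum_le_sum fun n _ => mul_le_mul_of_nonneg_left (keyy n) (hw n))
    -- main claim: some kink value is at least as good as v
    have main : ∃ b ∈ K, g b ≤ g v := by
      by_cases hlow : ∀ b ∈ K, v ≤ b
      · -- move up to the minimum of K
        refine ⟨K.min' hKne, K.min'_mem hKne, ?_⟩
        have hub : v ≤ K.min' hKne := hlow _ (K.min'_mem hKne)
        -- pointwise monotonicity
        have key : ∀ a b : ℝ, (a = v ∨ a ∈ K) → (b = v ∨ b ∈ K) →
            |S (K.min' hKne) a - S (K.min' hKne) b| ≤ |S v a - S v b| := by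
          intro a b ha hb
          by_cases ha' : a = v <;> by_cases hb' : b = v <;>
            simp only [hS, ha', hb', if_pos, if_neg, ite_true, ite_false]
          · simp
          · rcases hb with hb | hb
            · exact absurd hb hb'
            · exact l1tv_abs_mono_aux (Or.inl ⟨hub, K.min'_le b hb⟩)
          · rcases ha with ha | ha
            · exact absurd ha ha'
            · rw [abs_sub_comm (a := a), abs_sub_comm (a := a)]
              exact l1tv_abs_mono_aux (Or.inl ⟨hub, K.min'_le a ha⟩)
          · exact le_refl _
        exact gle _ key
      · by_cases hhigh : ∀ b ∈ K, b ≤ v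
        · refine ⟨K.max' hKne, K.max'_mem hKne, ?_⟩
          have hub : K.max' hKne ≤ v := hhigh _ (K.max'_mem hKne)
          have key : ∀ a b : ℝ, (a = v ∨ a ∈ K) → (b = v ∨ b ∈ K) →
              |S (K.max' hKne) a - S (K.max' hKne) b| ≤ |S v a - S v b| := by
            intro a b ha hb
            by_cases ha' : a = v <;> by_cases hb' : b = v <;>
              simp only [hS, ha', hb', if_pos, if_neg, ite_true, ite_false]
            · simp
            · rcases hb with hb | hb
              · exact absurd hb hb'
              · exact l1tv_abs_mono_aux (Or.inr ⟨K.le_max' b hb, hub⟩)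
            · rcases ha with ha | ha
              · exact absurd ha ha'
              · rw [abs_sub_comm (a := a), abs_sub_comm (a := a)]
                exact l1tv_abs_mono_aux (Or.inr ⟨K.le_max' a ha, hub⟩)
            · exact le_refl _
          exact gle _ key
        · -- interior case: v lies strictly between two kinks
          push_neg at hlow hhigh
          obtain ⟨p0, hp0K, hp0⟩ := hlow
          obtain ⟨q0, hq0K, hq0⟩ := hhigh
          set P : Finset ℝ := K.filter (fun b => b ≤ v) with hP
          have hPne : P.Nonempty := ⟨p0, Finset.mem_filter.2 ⟨hp0K, hp0.le⟩⟩
          set p : ℝ := P.max' hPne with hp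
          have hpK : p ∈ K := (Finset.mem_filter.1 (P.max'_mem hPne)).1
          have hpv : p ≤ v := (Finset.mem_filter.1 (P.max'_mem hPne)).2
          set Q : Finset ℝ := K.filter (fun b => v ≤ b) with hQ
          have hQne : Q.Nonempty := ⟨q0, Finset.mem_filter.2 ⟨hq0K, hq0.le⟩⟩
          set q : ℝ := Q.min' hQne with hq
          have hqK : q ∈ K := (Finset.mem_filter.1 (Q.min'_mem hQne)).1
          have hvq : v ≤ q := (Finset.mem_filter.1 (Q.min'_mem hQne)).2
          have hpq : p < q := by
            rcases lt_or_eq_of_le hpv with h | h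
            · exact lt_of_lt_of_le h hvq
            · exact absurd (h ▸ hpK) hvK
          have hsep : ∀ b ∈ K, b ≤ p ∨ q ≤ b := by
            intro b hb
            rcases le_total b v with h | h
            · exact Or.inl (P.le_max' b (Finset.mem_filter.2 ⟨hb, h⟩))
            · exact Or.inr (Q.min'_le b (Finset.mem_filter.2 ⟨hb, h⟩))
          set lam : ℝ := (v - p)/(q - p) with hlam
          have hlam0 : 0 ≤ lam := div_nonneg (by linarith) (by linarith)
          have hlam1 : lam ≤ 1 := by
            rw [hlam, div_le_one (by linarith)]; linarith
          -- pointwise affine identity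
          have key : ∀ a b : ℝ, (a = v ∨ a ∈ K) → (b = v ∨ b ∈ K) →
              |S v a - S v b| = (1 - lam) * |S p a - S p b| + lam * |S q a - S q b| := by
            intro a b ha hb
            by_cases ha' : a = v <;> by_cases hb' : b = v <;>
              simp only [hS, ha', hb', if_pos, if_neg, ite_true, ite_false]
            · simp
            · rcases hb with hb | hb
              · exact absurd hb hb'
              · exact l1tv_kink_aff hpq hpv hvq (hsep b hb)
            · rcases ha with ha | ha
              · exact absurd ha ha'
              · rw [abs_sub_comm (a := a), abs_sub_comm (a := a), abs_sub_comm (a := a)]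
                exact l1tv_kink_aff hpq hpv hvq (hsep a ha)
            · ring
          have keyy : ∀ a : ℝ, (a = v ∨ a ∈ K) → ∀ n : Fin N,
              |S v a - y n| = (1 - lam) * |S p a - y n| + lam * |S q a - y n| := by
            intro a ha n
            have e1 : (y n : ℝ) = S v (y n) := by simp [hS, hyv n]
            have e2 : (y n : ℝ) = S p (y n) := by simp [hS, hyv n]
            have e3 : (y n : ℝ) = S q (y n) := by simp [hS, hyv n]
            calc |S v a - y n| = |S v a - S v (y n)| := by rw [← e1]
              _ = (1 - lam) * |S p a - S p (y n)| + lam * |S q a - S q (y n)| :=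
                  key a (y n) ha (Or.inr (hyK n))
              _ = (1 - lam) * |S p a - y n| + lam * |S q a - y n| := by rw [← e2, ← e3]
          have gaff : g v = (1 - lam) * g p + lam * g q := by
            simp only [hg, l1tvReal]
            have e1 : (∑ i : Fin (N - 1),
                |S v (x ⟨i, by have := i.isLt; omega⟩) - S v (x ⟨(i : ℕ) + 1, by have := i.isLt; omega⟩)|)
                = (1 - lam) * (∑ i : Fin (N - 1),
                    |S p (x ⟨i, by have := i.isLt; omega⟩) - S p (x ⟨(i : ℕ) + 1, by have := i.isLt; omega⟩)|)
                  + lam * (∑ i : Fin (N - 1),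
                    |S q (x ⟨i, by have := i.isLt; omega⟩) - S q (x ⟨(i : ℕ) + 1, by have := i.isLt; omega⟩)|) := by
              rw [Finset.mul_sum, Finset.mul_sum, ← Finset.sum_add_distrib]
              exact Finset.sum_congr rfl fun i _ => key _ _ (hxK _) (hxK _)
            have e2 : (∑ n, w n * |S v (x n) - y n|)
                = (1 - lam) * (∑ n, w n * |S p (x n) - y n|)
                  + lam * (∑ n, w n * |S q (x n) - y n|) := by
              rw [Finset.mul_sum, Finset.mul_sum, ← Finset.sum_add_distrib]
              refine Finset.sum_congr rfl fun n _ => ?_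
              rw [keyy (x n) (hxK n) n]
              ring
            rw [e1, e2]
            ring
          have hmin : min (g p) (g q) ≤ g v := by
            rw [gaff]
            nlinarith [min_le_left (g p) (g q), min_le_right (g p) (g q),
              mul_le_mul_of_nonneg_left (min_le_left (g p) (g q)) (by linarith : (0:ℝ) ≤ 1 - lam),
              mul_le_mul_of_nonneg_left (min_le_right (g p) (g q)) hlam0]
          rcases le_total (g p) (g q) with h | h
          · exact ⟨p, hpK, by rw [min_eq_left h] at hmin; exact hmin⟩
          · exact ⟨q, hqK, by rw [min_eq_right h] at hmin; exact hmin⟩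
    obtain ⟨b, hbK, hgb⟩ := main
    refine ⟨fun n => S b (x n), ?_, by rw [← hgv]; exact hgb⟩
    intro u hu
    obtain ⟨huI, huV⟩ := Finset.mem_sdiff.1 hu
    obtain ⟨n, -, hn⟩ := Finset.mem_image.1 huI
    by_cases h : x n = v
    · have hub : u = b := by simpa [hS, h] using hn.symm
      subst hub
      rcases Finset.mem_union.1 hbK with hb | hb
      · exact absurd hb huV
      · obtain ⟨hbv, hbI⟩ := Finset.mem_erase.1 hb
        exact Finset.mem_erase.2 ⟨hbv, Finset.mem_sdiff.2 ⟨hbI, huV⟩⟩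
    · have hux : u = x n := by simpa [hS, h] using hn.symm
      subst hux
      exact Finset.mem_erase.2 ⟨h, Finset.mem_sdiff.2
        ⟨Finset.mem_image_of_mem x (Finset.mem_univ n), huV⟩⟩
  -- Reduction: every x is dominated by some z with values in Vfin.
  have reduce : ∀ (k : ℕ) (x : Fin N → ℝ), ((Finset.univ.image x) \ Vfin).card ≤ k →
      ∃ z : Fin N → ℝ, (∀ n, z n ∈ Vfin) ∧ l1tvReal N α w y z ≤ l1tvReal N α w y x := by
    intro k
    induction k with
    | zero =>
      intro x hx
      refine ⟨x, fun n => ?_, le_refl _⟩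
      have hemp : (Finset.univ.image x) \ Vfin = ∅ :=
        Finset.card_eq_zero.mp (Nat.le_zero.mp hx)
      by_contra h
      have : x n ∈ (Finset.univ.image x) \ Vfin :=
        Finset.mem_sdiff.2 ⟨Finset.mem_image_of_mem x (Finset.mem_univ n), h⟩
      rw [hemp] at this
      exact absurd this (Finset.notMem_empty _)
    | succ k ih =>
      intro x hx
      by_cases hk : ((Finset.univ.image x) \ Vfin).card ≤ k
      · exact ih x hk
      · have hne : ((Finset.univ.image x) \ Vfin).Nonempty := by
          rw [← Finset.card_pos]; omega
        obtain ⟨v, hvmem⟩ := hne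
        have hvV : v ∉ Vfin := (Finset.mem_sdiff.1 hvmem).2
        obtain ⟨x₂, hsub, hle⟩ := step x v hvV
        have hcard : ((Finset.univ.image x₂) \ Vfin).card ≤ k := by
          have h1 := Finset.card_le_card hsub
          rw [Finset.card_erase_of_mem hvmem] at h1
          omega
        obtain ⟨z, hz, hzle⟩ := ih x₂ hcard
        exact ⟨z, hz, le_trans hzle hle⟩
  -- Finite minimization over Vfin^N.
  set C : Finset (Fin N → ℝ) := Fintype.piFinset (fun _ => Vfin) with hC
  have hCne : C.Nonempty := ⟨y, Fintype.mem_piFinset.2 hVy⟩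
  obtain ⟨x', hx'C, hx'min⟩ := Finset.exists_min_image C (l1tvReal N α w y) hCne
  refine ⟨x', fun n => ?_, fun x => ?_⟩
  · obtain ⟨m, -, hm⟩ := Finset.mem_image.1 (Fintype.mem_piFinset.1 hx'C n)
    exact ⟨m, hm⟩
  · obtain ⟨z, hz, hzx⟩ := reduce _ x le_rfl
    exact le_trans (hx'min z (Fintype.mem_piFinset.2 hz)) hzx
end

section
/- Let d_T denote the arc-length distance on the circle S¹ (equivalently, d_T(u,v) = min over k ∈ ℤ of |u − v + 2πk| for angles u, v). For a finite multiset of circle-valued data points y_1,…,y_m with nonnegative weights, the weighted median functional μ ↦ Σ_i w_i d_T(μ, y_i) attains its minimum over S¹ at some point in the set {y_1,…,y_m} ∪ {ỹ_1,…,ỹ_m}, where ỹ_i denotes the antipodal point of y_i. -/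
open Finset

/-- Arc-length (geodesic) distance on the circle `S¹ = ℝ/2πℤ`, via the representative
of the difference in `(-π, π]`. -/
noncomputable def arcDist (a b : Real.Angle) : ℝ := |(a - b).toReal|

lemma Real.Angle.neg_toReal' (θ : Real.Angle) (h : θ ≠ Real.pi) :
    (-θ).toReal = -θ.toReal := by
  have h2 : θ.toReal < Real.pi :=
    lt_of_le_of_ne (Real.Angle.toReal_le_pi θ) (fun e => h (Real.Angle.toReal_eq_pi_iff.mp e))
  have h3 : -θ = ((-θ.toReal : ℝ) : Real.Angle) := by
    rw [Real.Angle.coe_neg, Real.Angle.coe_toReal]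
  rw [h3, Real.Angle.toReal_coe_eq_self_iff.mpr
    ⟨by linarith, by linarith [Real.Angle.neg_pi_lt_toReal θ]⟩]

lemma arcDist_neg_neg (a b : Real.Angle) : arcDist (-a) (-b) = arcDist a b := by
  unfold arcDist
  have h : -a - -b = -(a - b) := by abel
  rw [h]
  by_cases hp : a - b = Real.pi
  · rw [hp, Real.Angle.neg_coe_pi]
  · rw [Real.Angle.neg_toReal' _ hp, abs_neg]

/-- Helper: if all data points and antipodes differ from `μ` and the signed weight sum is
nonpositive, moving right reaches a candidate with no larger objective. -/
lemma slide_right (m : ℕ) (hm : 1 ≤ m) (y : Fin m → Real.Angle) (w : Fin m → ℝ)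
    (μ : Real.Angle)
    (hne : ∀ i, (μ - y i).toReal ≠ 0 ∧ (μ - y i).toReal ≠ Real.pi)
    (hc : (∑ i, w i * (if 0 < (μ - y i).toReal then (1:ℝ) else -1)) ≤ 0) :
    ∃ j : Fin m, (∑ i, w i * arcDist (y j) (y i)) ≤ ∑ i, w i * arcDist μ (y i) ∨
      (∑ i, w i * arcDist (y j + (Real.pi : Real.Angle)) (y i)) ≤ ∑ i, w i * arcDist μ (y i) := by
  haveI : NeZero m := ⟨by omega⟩
  set a : Fin m → ℝ := fun i => (μ - y i).toReal with ha
  have ha1 : ∀ i, -Real.pi < a i := fun i => Real.Angle.neg_pi_lt_toReal _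
  have ha2 : ∀ i, a i < Real.pi := fun i =>
    lt_of_le_of_ne (Real.Angle.toReal_le_pi _) (hne i).2
  have ha0 : ∀ i, a i ≠ 0 := fun i => (hne i).1
  set g : Fin m → ℝ := fun i => if a i < 0 then -a i else Real.pi - a i with hg
  have hT : (Finset.univ.image g).Nonempty :=
    (Finset.univ_nonempty).image g
  set t : ℝ := (Finset.univ.image g).min' hT with htdef
  have ht_le : ∀ i, t ≤ g i := fun i =>
    Finset.min'_le _ _ (Finset.mem_image_of_mem g (Finset.mem_univ i))
  have hg_pos : ∀ i, 0 < g i := by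
    intro i
    by_cases h : a i < 0
    · simp only [hg, if_pos h]; linarith
    · simp only [hg, if_neg h]; linarith [ha2 i]
  have ht_pos : 0 < t := by
    obtain ⟨j, _, hj⟩ := Finset.mem_image.mp ((Finset.univ.image g).min'_mem hT)
    rw [htdef, ← hj]; exact hg_pos j
  -- per-point distance formula at μ + t
  have key : ∀ i, arcDist (μ + (t : Real.Angle)) (y i)
      = |a i| + (if 0 < a i then t else -t) * 1 := by
    intro i
    have hdiff : μ + (t : Real.Angle) - y i = ((a i + t : ℝ) : Real.Angle) := by
      rw [Real.Angle.coe_add]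
      have : (a i : Real.Angle) = μ - y i := Real.Angle.coe_toReal _
      rw [this]; abel
    unfold arcDist
    rw [hdiff]
    by_cases h : a i < 0
    · have hle : t ≤ -a i := by have := ht_le i; simpa [hg, if_pos h] using this
      have hIoc : (((a i + t : ℝ)) : Real.Angle).toReal = a i + t :=
        Real.Angle.toReal_coe_eq_self_iff.mpr
          ⟨by linarith [ha1 i], by linarith [Real.pi_pos]⟩
      rw [hIoc]
      have h1 : ¬(0 < a i) := by linarith
      rw [if_neg h1, abs_of_nonpos (by linarith : a i + t ≤ 0), abs_of_neg h]
      ring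
    · have hgt : 0 < a i := lt_of_le_of_ne (not_lt.mp h) (Ne.symm (ha0 i))
      have hle : t ≤ Real.pi - a i := by have := ht_le i; simpa [hg, if_neg h] using this
      have hIoc : (((a i + t : ℝ)) : Real.Angle).toReal = a i + t :=
        Real.Angle.toReal_coe_eq_self_iff.mpr ⟨by linarith [ha1 i], by linarith⟩
      rw [hIoc, if_pos hgt, abs_of_pos (by linarith : (0:ℝ) < a i + t), abs_of_pos hgt]
      ring
  have hFle : (∑ i, w i * arcDist (μ + (t : Real.Angle)) (y i))
      ≤ ∑ i, w i * arcDist μ (y i) := by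
    have hsum : (∑ i, w i * arcDist (μ + (t : Real.Angle)) (y i))
        = (∑ i, w i * |a i|) + t * (∑ i, w i * (if 0 < a i then (1:ℝ) else -1)) := by
      rw [Finset.mul_sum, ← Finset.sum_add_distrib]
      refine Finset.sum_congr rfl fun i _ => ?_
      rw [key i]
      by_cases h : 0 < a i <;> simp [h] <;> ring
    have harc : ∀ i, arcDist μ (y i) = |a i| := fun i => rfl
    rw [hsum]
    have : t * (∑ i, w i * (if 0 < a i then (1:ℝ) else -1)) ≤ 0 :=
      mul_nonpos_of_nonneg_of_nonpos ht_pos.le hc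
    simp only [harc]
    linarith
  -- endpoint is a candidate
  obtain ⟨j, _, hj⟩ := Finset.mem_image.mp ((Finset.univ.image g).min'_mem hT)
  refine ⟨j, ?_⟩
  have hmuj : μ = y j + ((a j : ℝ) : Real.Angle) := by
    have : (a j : Real.Angle) = μ - y j := Real.Angle.coe_toReal _
    rw [this]; abel
  by_cases h : a j < 0
  · left
    have ht : t = -a j := by rw [htdef, ← hj]; simp [hg, if_pos h]
    have : μ + (t : Real.Angle) = y j := by
      rw [hmuj, ht]
      rw [add_assoc, ← Real.Angle.coe_add]
      simp
    rw [← this]; exact hFle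
  · right
    have ht : t = Real.pi - a j := by rw [htdef, ← hj]; simp [hg, if_neg h]
    have : μ + (t : Real.Angle) = y j + (Real.pi : Real.Angle) := by
      rw [hmuj, ht, add_assoc, ← Real.Angle.coe_add]
      norm_num
    rw [← this]; exact hFle

/-- The weighted median functional `μ ↦ ∑ i, w i * d_T(μ, y i)` for circle-valued data
attains its minimum over `S¹` at one of the data points or one of their antipodal points. -/
theorem weighted_median_circle_attained_at_data_or_antipodal
    (m : ℕ) (hm : 1 ≤ m) (y : Fin m → Real.Angle) (w : Fin m → ℝ) (hw : ∀ i, 0 ≤ w i) :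
    ∃ μ' : Real.Angle,
      (μ' ∈ Set.range y ∪ Set.range (fun i => y i + (Real.pi : Real.Angle))) ∧
      ∀ μ : Real.Angle,
        (∑ j, w j * arcDist μ' (y j)) ≤ ∑ j, w j * arcDist μ (y j) := by
  classical
  haveI : NeZero m := ⟨by omega⟩
  set F : Real.Angle → ℝ := fun μ => ∑ j, w j * arcDist μ (y j) with hF
  -- candidate finset
  set S : Finset Real.Angle :=
    Finset.univ.image y ∪ Finset.univ.image (fun i => y i + (Real.pi : Real.Angle)) with hS
  have hySmem : ∀ j, y j ∈ S := fun j =>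
    Finset.mem_union_left _ (Finset.mem_image_of_mem y (Finset.mem_univ j))
  have hyPmem : ∀ j, y j + (Real.pi : Real.Angle) ∈ S := fun j =>
    Finset.mem_union_right _ (Finset.mem_image_of_mem _ (Finset.mem_univ j))
  have hSne : S.Nonempty := ⟨y ⟨0, hm⟩, hySmem _⟩
  obtain ⟨μ', hμ'S, hμ'min⟩ := S.exists_min_image F hSne
  have hμ'range : μ' ∈ Set.range y ∪ Set.range (fun i => y i + (Real.pi : Real.Angle)) := by
    simp only [hS, Finset.mem_union, Finset.mem_image, Finset.mem_univ, true_and] at hμ'S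
    rcases hμ'S with ⟨i, hi⟩ | ⟨i, hi⟩
    · exact Or.inl ⟨i, hi⟩
    · exact Or.inr ⟨i, hi⟩
  refine ⟨μ', hμ'range, ?_⟩
  intro μ
  -- suffices: some candidate has value ≤ F μ
  suffices h : ∃ c ∈ S, F c ≤ F μ by
    obtain ⟨c, hcS, hc⟩ := h
    exact le_trans (hμ'min c hcS) hc
  by_cases hμ : ∃ i, (μ - y i).toReal = 0 ∨ (μ - y i).toReal = Real.pi
  · obtain ⟨i, hi | hi⟩ := hμ
    · have : μ = y i := by
        have := Real.Angle.toReal_eq_zero_iff.mp hi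
        have h2 : μ - y i = 0 := this
        rw [sub_eq_zero] at h2; exact h2
      exact ⟨μ, this ▸ hySmem i, le_refl _⟩
    · have : μ = y i + (Real.pi : Real.Angle) := by
        have h2 := Real.Angle.toReal_eq_pi_iff.mp hi
        rw [sub_eq_iff_eq_add] at h2
        rw [h2]; abel
      exact ⟨μ, this ▸ hyPmem i, le_refl _⟩
  · push_neg at hμ
    set c : ℝ := ∑ i, w i * (if 0 < (μ - y i).toReal then (1:ℝ) else -1) with hcdef
    by_cases hcle : c ≤ 0
    · obtain ⟨j, hj | hj⟩ := slide_right m hm y w μ hμ hcle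
      · exact ⟨y j, hySmem j, hj⟩
      · exact ⟨y j + (Real.pi : Real.Angle), hyPmem j, hj⟩
    · -- negate everything and apply slide_right
      push_neg at hcle
      set y' : Fin m → Real.Angle := fun i => -y i with hy'
      have harc : ∀ (ν : Real.Angle) i, arcDist (-ν) (y' i) = arcDist ν (y i) := by
        intro ν i; rw [hy']; exact arcDist_neg_neg ν (y i)
      have htoReal : ∀ i, (-μ - y' i).toReal = -((μ - y i).toReal) := by
        intro i
        have h1 : -μ - y' i = -(μ - y i) := by simp [hy']; abel
        rw [h1, Real.Angle.neg_toReal']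
        intro hpi
        exact (hμ i).2 (Real.Angle.toReal_eq_pi_iff.mpr hpi)
      have hne' : ∀ i, (-μ - y' i).toReal ≠ 0 ∧ (-μ - y' i).toReal ≠ Real.pi := by
        intro i
        rw [htoReal i]
        constructor
        · simpa using (hμ i).1
        · intro h
          have : (μ - y i).toReal = -Real.pi := by linarith
          linarith [Real.Angle.neg_pi_lt_toReal (μ - y i), this]
      have hc' : (∑ i, w i * (if 0 < (-μ - y' i).toReal then (1:ℝ) else -1)) ≤ 0 := by
        have : (∑ i, w i * (if 0 < (-μ - y' i).toReal then (1:ℝ) else -1)) = -c := by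
          rw [hcdef, ← Finset.sum_neg_distrib]
          refine Finset.sum_congr rfl fun i _ => ?_
          rw [htoReal i]
          rcases lt_trichotomy ((μ - y i).toReal) 0 with h | h | h
          · rw [if_pos (by linarith), if_neg (by linarith)]; ring
          · exact absurd h (hμ i).1
          · rw [if_neg (by linarith), if_pos h]; ring
        rw [this]; linarith
      obtain ⟨j, hj | hj⟩ := slide_right m hm y' w (-μ) hne' hc'
      · refine ⟨y j, hySmem j, ?_⟩
        calc F (y j) = ∑ i, w i * arcDist (y' j) (y' i) := by
              refine Finset.sum_congr rfl fun i _ => ?_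
              rw [show y' j = -(y j) from rfl, harc (y j) i]
          _ ≤ ∑ i, w i * arcDist (-μ) (y' i) := hj
          _ = F μ := by
              refine Finset.sum_congr rfl fun i _ => ?_
              rw [harc μ i]
      · refine ⟨y j + (Real.pi : Real.Angle), hyPmem j, ?_⟩
        have hant : y' j + (Real.pi : Real.Angle) = -(y j + (Real.pi : Real.Angle)) := by
          rw [hy', neg_add, Real.Angle.neg_coe_pi]
        calc F (y j + (Real.pi : Real.Angle))
            = ∑ i, w i * arcDist (y' j + (Real.pi : Real.Angle)) (y' i) := by
              refine Finset.sum_congr rfl fun i _ => ?_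
              rw [hant, harc (y j + (Real.pi : Real.Angle)) i]
          _ ≤ ∑ i, w i * arcDist (-μ) (y' i) := hj
          _ = F μ := by
              refine Finset.sum_congr rfl fun i _ => ?_
              rw [harc μ i]
end

section
/- Consider the L2-TV functional E(x_1, x_2) = α|x_1 − x_2| + x_1² + (x_2 − 1)² for data y = (0,1) and α > 0. If 0 < α < 1 then the unique global minimizer is (α/2, 1 − α/2), and if α ≥ 1 the unique global minimizer is (1/2, 1/2). In particular, for every α > 0, no global minimizer takes any of its values in the data set {0, 1}. -/
/-- For the `L²`-TV toy example `E(x₁,x₂) = α|x₁-x₂| + x₁² + (x₂-1)²` on data `y = (0,1)`: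
for `0 < α < 1` the unique global minimizer is `(α/2, 1-α/2)`, for `α ≥ 1` it is `(1/2,1/2)`,
and for every `α > 0` no global minimizer takes any of its values in the data set `{0,1}`. -/
theorem l2tv_two_point_example (α : ℝ) (hα : 0 < α)
    (E : ℝ × ℝ → ℝ) (hE : ∀ p : ℝ × ℝ, E p = α * |p.1 - p.2| + p.1 ^ 2 + (p.2 - 1) ^ 2) :
    (α < 1 →
      ((∀ q, E (α / 2, 1 - α / 2) ≤ E q) ∧
        ∀ p, (∀ q, E p ≤ E q) → p = (α / 2, 1 - α / 2))) ∧
    (1 ≤ α →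
      ((∀ q, E (1 / 2, 1 / 2) ≤ E q) ∧
        ∀ p, (∀ q, E p ≤ E q) → p = (1 / 2, 1 / 2))) ∧
    (∀ p, (∀ q, E p ≤ E q) →
      p.1 ∉ ({0, 1} : Set ℝ) ∧ p.2 ∉ ({0, 1} : Set ℝ)) := by
  have habs : ∀ x y : ℝ, y - x ≤ |x - y| := fun x y => by
    rw [abs_sub_comm]; exact le_abs_self _
  -- case α < 1
  have hlow1 : α < 1 → ∀ q : ℝ × ℝ,
      α - α ^ 2 / 2 + (q.1 - α / 2) ^ 2 + (q.2 - (1 - α / 2)) ^ 2 ≤ E q := by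
    intro _ q
    rw [hE]
    have h1 := mul_le_mul_of_nonneg_left (habs q.1 q.2) hα.le
    nlinarith [h1]
  have hval1 : α < 1 → E (α / 2, 1 - α / 2) = α - α ^ 2 / 2 := by
    intro h1
    rw [hE]
    have : |((α / 2 : ℝ), 1 - α / 2).1 - ((α / 2 : ℝ), 1 - α / 2).2| = 1 - α := by
      simp only
      rw [abs_of_nonpos (by linarith)]
      ring
    rw [this]; ring
  have huniq1 : α < 1 → ∀ p : ℝ × ℝ, (∀ q, E p ≤ E q) → p = (α / 2, 1 - α / 2) := by
    intro h1 p hp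
    have h2 := hp (α / 2, 1 - α / 2)
    rw [hval1 h1] at h2
    have h3 := hlow1 h1 p
    have hx : p.1 = α / 2 := by nlinarith [sq_nonneg (p.1 - α / 2), sq_nonneg (p.2 - (1 - α / 2))]
    have hy : p.2 = 1 - α / 2 := by nlinarith [sq_nonneg (p.1 - α / 2), sq_nonneg (p.2 - (1 - α / 2))]
    exact Prod.ext hx hy
  -- case α ≥ 1
  have hlow2 : 1 ≤ α → ∀ q : ℝ × ℝ,
      1 / 2 + (q.1 - 1 / 2) ^ 2 + (q.2 - 1 / 2) ^ 2 ≤ E q := by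
    intro h1 q
    rw [hE]
    have h2 := mul_le_mul_of_nonneg_right h1 (abs_nonneg (q.1 - q.2))
    have h3 := habs q.1 q.2
    nlinarith [h2, h3]
  have hval2 : E (1 / 2, 1 / 2) = 1 / 2 := by
    rw [hE]; norm_num
  have huniq2 : ∀ p : ℝ × ℝ, (∀ q, E p ≤ E q) → 1 ≤ α → p = (1 / 2, 1 / 2) := by
    intro p hp h1
    have h2 := hp (1 / 2, 1 / 2)
    rw [hval2] at h2
    have h3 := hlow2 h1 p
    have hx : p.1 = 1 / 2 := by nlinarith [sq_nonneg (p.1 - 1 / 2), sq_nonneg (p.2 - 1 / 2)]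
    have hy : p.2 = 1 / 2 := by nlinarith [sq_nonneg (p.1 - 1 / 2), sq_nonneg (p.2 - 1 / 2)]
    exact Prod.ext hx hy
  refine ⟨fun h1 => ⟨fun q => ?_, huniq1 h1⟩, fun h1 => ⟨fun q => ?_, fun p hp => huniq2 p hp h1⟩, ?_⟩
  · rw [hval1 h1]
    nlinarith [hlow1 h1 q, sq_nonneg (q.1 - α / 2), sq_nonneg (q.2 - (1 - α / 2))]
  · rw [hval2]
    nlinarith [hlow2 h1 q, sq_nonneg (q.1 - 1 / 2), sq_nonneg (q.2 - 1 / 2)]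
  · intro p hp
    rcases lt_or_ge α 1 with h1 | h1
    · rw [huniq1 h1 p hp]
      constructor <;> simp only [Set.mem_insert_iff, Set.mem_singleton_iff] <;>
        push_neg <;> constructor <;> intro h <;> nlinarith
    · rw [huniq2 p hp h1]
      constructor <;> norm_num
end

section
/- Let v_1 < v_2 < … < v_K be real numbers, B ∈ ℝ^K, and α > 0. Define D ∈ ℝ^K by the two-pass procedure: first set D ← B; then for k = 2,…,K set D_k ← min(D_{k−1} + α(v_k − v_{k−1}), D_k); then for k = K−1,…,1 set D_k ← min(D_{k+1} + α(v_{k+1} − v_k), D_k). The resulting D satisfies D_k = min_{1 ≤ l ≤ K} (B_l + α|v_k − v_l|) for every k. -/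
open Finset

/-- Correctness of the two-pass distance transform on a non-uniform one-dimensional grid:
the forward pass `D1` followed by the backward pass `D` computes
`D_k = min_l (B_l + α |v_k - v_l|)`. -/
theorem two_pass_distance_transform_correct
    (K : ℕ) (hK : 0 < K) (v : Fin K → ℝ) (hv : StrictMono v)
    (B : Fin K → ℝ) (α : ℝ) (hα : 0 < α)
    (D1 D : Fin K → ℝ)
    (hD1_0 : D1 ⟨0, hK⟩ = B ⟨0, hK⟩)
    (hD1 : ∀ (k : ℕ) (h : k + 1 < K),
      D1 ⟨k + 1, h⟩ =
        min (D1 ⟨k, by omega⟩ + α * (v ⟨k + 1, h⟩ - v ⟨k, by omega⟩)) (B ⟨k + 1, h⟩))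
    (hD_last : D ⟨K - 1, by omega⟩ = D1 ⟨K - 1, by omega⟩)
    (hD : ∀ (k : ℕ) (h : k + 1 < K),
      D ⟨k, by omega⟩ =
        min (D ⟨k + 1, h⟩ + α * (v ⟨k + 1, h⟩ - v ⟨k, by omega⟩)) (D1 ⟨k, by omega⟩)) :
    ∀ k : Fin K,
      D k = Finset.univ.inf' ⟨⟨0, hK⟩, Finset.mem_univ _⟩
        (fun l => B l + α * |v k - v l|) := by
  have hne : (Finset.univ : Finset (Fin K)).Nonempty := ⟨⟨0, hK⟩, Finset.mem_univ _⟩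
  set F : Fin K → ℝ := fun k => Finset.univ.inf' hne (fun l => B l + α * |v k - v l|)
    with hFdef
  have hFle : ∀ (k l : Fin K), F k ≤ B l + α * |v k - v l| := fun k l =>
    Finset.inf'_le _ (Finset.mem_univ l)
  have hFmin : ∀ k : Fin K, ∃ l, F k = B l + α * |v k - v l| := by
    intro k
    obtain ⟨l, _, hl⟩ := Finset.exists_mem_eq_inf' hne (fun l => B l + α * |v k - v l|)
    exact ⟨l, hl⟩
  -- triangle inequalities
  have htri : ∀ (k : ℕ) (h : k + 1 < K) (l : Fin K),
      |v ⟨k + 1, h⟩ - v l| ≤ |v ⟨k, by omega⟩ - v l| + (v ⟨k + 1, h⟩ - v ⟨k, by omega⟩) := by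
    intro k h l
    have hlt : v ⟨k, by omega⟩ < v ⟨k + 1, h⟩ := hv (by simp [Fin.lt_def])
    rcases abs_cases (v ⟨k, by omega⟩ - v l) with ⟨h1, h2⟩ | ⟨h1, h2⟩ <;>
      rcases abs_cases (v ⟨k + 1, h⟩ - v l) with ⟨h3, h4⟩ | ⟨h3, h4⟩ <;> linarith
  have htri2 : ∀ (k : ℕ) (h : k + 1 < K) (l : Fin K),
      |v ⟨k, by omega⟩ - v l| ≤ |v ⟨k + 1, h⟩ - v l| + (v ⟨k + 1, h⟩ - v ⟨k, by omega⟩) := by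
    intro k h l
    have hlt : v ⟨k, by omega⟩ < v ⟨k + 1, h⟩ := hv (by simp [Fin.lt_def])
    rcases abs_cases (v ⟨k, by omega⟩ - v l) with ⟨h1, h2⟩ | ⟨h1, h2⟩ <;>
      rcases abs_cases (v ⟨k + 1, h⟩ - v l) with ⟨h3, h4⟩ | ⟨h3, h4⟩ <;> linarith
  -- forward pass: upper bound
  have A1 : ∀ k, ∀ (hk : k < K) (l : Fin K), l.1 ≤ k →
      D1 ⟨k, hk⟩ ≤ B l + α * (v ⟨k, hk⟩ - v l) := by
    intro k
    induction k with
    | zero =>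
      intro hk l hl
      have hl0 : l.1 = 0 := by omega
      have : l = ⟨0, hK⟩ := Fin.ext (by simp [hl0])
      subst this
      simp [hD1_0]
    | succ n ih =>
      intro hk l hl
      rw [hD1 n hk]
      rcases Nat.lt_or_ge l.1 (n + 1) with h | h
      · have h1 := ih (by omega) l (by omega)
        calc min (D1 ⟨n, by omega⟩ + α * (v ⟨n + 1, hk⟩ - v ⟨n, by omega⟩)) (B ⟨n + 1, hk⟩)
            ≤ D1 ⟨n, by omega⟩ + α * (v ⟨n + 1, hk⟩ - v ⟨n, by omega⟩) := min_le_left _ _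
          _ ≤ (B l + α * (v ⟨n, by omega⟩ - v l)) + α * (v ⟨n + 1, hk⟩ - v ⟨n, by omega⟩) := by
              linarith
          _ = B l + α * (v ⟨n + 1, hk⟩ - v l) := by ring
      · have hl0 : l.1 = n + 1 := by omega
        have : l = ⟨n + 1, hk⟩ := Fin.ext (by simp [hl0])
        subst this
        simp
  -- forward pass: lower bound
  have A2 : ∀ k, ∀ (hk : k < K), F ⟨k, hk⟩ ≤ D1 ⟨k, hk⟩ := by
    intro k
    induction k with
    | zero =>
      intro hk
      rw [hD1_0]
      simpa using hFle ⟨0, hK⟩ ⟨0, hK⟩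
    | succ n ih =>
      intro hk
      rw [hD1 n hk]
      refine le_min ?_ ?_
      · obtain ⟨l, hl⟩ := hFmin ⟨n, by omega⟩
        have hm := mul_le_mul_of_nonneg_left (htri n hk l) hα.le
        rw [mul_add] at hm
        have h2 := hFle ⟨n + 1, hk⟩ l
        have h3 := ih (by omega)
        linarith
      · simpa using hFle ⟨n + 1, hk⟩ ⟨n + 1, hk⟩
  -- backward pass
  have A3 : ∀ m k (hk : k < K), K - 1 - k = m →
      (∀ l : Fin K, D ⟨k, hk⟩ ≤ B l + α * |v ⟨k, hk⟩ - v l|) ∧ F ⟨k, hk⟩ ≤ D ⟨k, hk⟩ := by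
    intro m
    induction m with
    | zero =>
      intro k hk hm
      have hk' : k = K - 1 := by omega
      subst hk'
      rw [hD_last]
      constructor
      · intro l
        have hvl : v l ≤ v ⟨K - 1, hk⟩ := hv.monotone (by simp [Fin.le_def]; omega)
        have h2 := A1 (K - 1) hk l (by omega)
        rw [abs_of_nonneg (by linarith : (0:ℝ) ≤ v ⟨K - 1, hk⟩ - v l)]
        exact h2
      · exact A2 (K - 1) hk
    | succ n ih =>
      intro k hk hm
      have h1 : k + 1 < K := by omega
      obtain ⟨ihle, ihge⟩ := ih (k + 1) h1 (by omega)
      rw [hD k h1]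
      constructor
      · intro l
        rcases Nat.lt_or_ge k l.1 with h | h
        · -- l > k : use backward bound
          have h2 := ihle l
          have hvl : v ⟨k + 1, h1⟩ ≤ v l := hv.monotone (by simp [Fin.le_def]; omega)
          have hvk : v ⟨k, by omega⟩ < v ⟨k + 1, h1⟩ := hv (by simp [Fin.lt_def])
          have habs1 : |v ⟨k + 1, h1⟩ - v l| = v l - v ⟨k + 1, h1⟩ := by
            rw [abs_sub_comm]; exact abs_of_nonneg (by linarith)
          have habs2 : |v ⟨k, hk⟩ - v l| = v l - v ⟨k, hk⟩ := by
            rw [abs_sub_comm]; exact abs_of_nonneg (by linarith)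
          rw [habs1] at h2
          rw [habs2]
          calc min (D ⟨k + 1, h1⟩ + α * (v ⟨k + 1, h1⟩ - v ⟨k, by omega⟩)) (D1 ⟨k, by omega⟩)
              ≤ D ⟨k + 1, h1⟩ + α * (v ⟨k + 1, h1⟩ - v ⟨k, by omega⟩) := min_le_left _ _
            _ ≤ (B l + α * (v l - v ⟨k + 1, h1⟩)) + α * (v ⟨k + 1, h1⟩ - v ⟨k, by omega⟩) := by
                linarith
            _ = B l + α * (v l - v ⟨k, hk⟩) := by ring
        · -- l ≤ k : use forward bound
          have h2 := A1 k hk l h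
          have hvl : v l ≤ v ⟨k, hk⟩ := hv.monotone (by simp [Fin.le_def]; omega)
          have habs : |v ⟨k, hk⟩ - v l| = v ⟨k, hk⟩ - v l := abs_of_nonneg (by linarith)
          rw [habs]
          exact le_trans (min_le_right _ _) h2
      · refine le_min ?_ (A2 k hk)
        obtain ⟨l, hl⟩ := hFmin ⟨k + 1, h1⟩
        have hm2 := mul_le_mul_of_nonneg_left (htri2 k h1 l) hα.le
        rw [mul_add] at hm2
        have h2 := hFle ⟨k, hk⟩ l
        linarith
  intro k
  obtain ⟨hle, hge⟩ := A3 (K - 1 - k.1) k.1 k.2 rfl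
  have hk : (⟨k.1, k.2⟩ : Fin K) = k := Fin.ext rfl
  rw [hk] at hle hge
  refine le_antisymm ?_ hge
  exact Finset.le_inf' _ _ (fun l _ => hle l)
end

section
/- Let v_1 < … < v_K be angles in (−π, π], B ∈ ℝ^K, α > 0. Define the extended grid v' of length 3K by v'_l = v_l − 2π for l = 1,…,K, v'_{K+l} = v_l, v'_{2K+l} = v_l + 2π, and B' of length 3K by repeating B three times. Let D' be the real-valued distance transform D'_l = min_{1 ≤ j ≤ 3K} (B'_j + α|v'_l − v'_j|). Then for every k = 1,…,K, min_{1 ≤ l ≤ K} (B_l + α d_T(v_k, v_l)) = D'_{K+k}, where d_T is the arc-length distance on the circle. -/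
open Real Finset

/-- Arc-length distance on the circle, in terms of angle representatives in `(-π, π]`. -/
noncomputable def dCirc (u w : ℝ) : ℝ := min (|u - 2 * π - w|) (min (|u - w|) (|u + 2 * π - w|))

/-- Correctness of the circular distance transform by unrolling the circle into three
copies: for angles `v₁ < … < v_K` in `(-π,π]`, the circular distance transform
`min_l (B_l + α d_T(v_k, v_l))` equals the middle block `D'_{K+k}` of the linear distance
transform on the extended grid `v' = (v - 2π, v, v + 2π)` with data `B' = (B, B, B)`. -/
theorem circular_distance_transform_by_unrolling
    (K : ℕ) (hK : 0 < K) (v : Fin K → ℝ) (hv : StrictMono v)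
    (hrange : ∀ k, v k ∈ Set.Ioc (-π) π)
    (B : Fin K → ℝ) (α : ℝ) (hα : 0 < α)
    (v' : Fin (3 * K) → ℝ) (B' : Fin (3 * K) → ℝ)
    (hv' : ∀ l : Fin (3 * K),
      v' l = if h : (l : ℕ) < K then v ⟨l, h⟩ - 2 * π
        else if h2 : (l : ℕ) < 2 * K then v ⟨(l : ℕ) - K, by omega⟩
        else v ⟨(l : ℕ) - 2 * K, by have := l.isLt; omega⟩ + 2 * π)
    (hB' : ∀ l : Fin (3 * K), B' l = B ⟨(l : ℕ) % K, Nat.mod_lt _ hK⟩)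
    (D' : Fin (3 * K) → ℝ)
    (hD' : ∀ l : Fin (3 * K),
      D' l = Finset.univ.inf' ⟨⟨0, by omega⟩, Finset.mem_univ _⟩
        (fun j : Fin (3 * K) => B' j + α * |v' l - v' j|)) :
    ∀ k : Fin K,
      Finset.univ.inf' ⟨⟨0, hK⟩, Finset.mem_univ _⟩
          (fun l : Fin K => B l + α * dCirc (v k) (v l)) =
        D' ⟨K + (k : ℕ), by have := k.isLt; omega⟩ := by
  intro k
  have hk := k.isLt
  have hvk : v' ⟨K + (k : ℕ), by omega⟩ = v k := by
    rw [hv']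
    rw [dif_neg (by simp only [Fin.val_mk]; omega), dif_pos (by simp only [Fin.val_mk]; omega)]
    congr 1
    exact Fin.ext (by simp only [Fin.val_mk]; omega)
  rw [hD', hvk]
  apply le_antisymm
  · apply Finset.le_inf'
    intro j _
    have hj := j.isLt
    set l : Fin K := ⟨(j : ℕ) % K, Nat.mod_lt _ hK⟩ with hldef
    refine le_trans (Finset.inf'_le _ (Finset.mem_univ l)) ?_
    have hBj : B' j = B l := by rw [hB']
    rw [hBj]
    apply (add_le_add_iff_left _).mpr
    apply mul_le_mul_of_nonneg_left _ hα.le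
    rw [hv' j, dCirc]
    rcases lt_or_ge (j : ℕ) K with h1 | h1
    · rw [dif_pos h1]
      have hvl : v ⟨(j : ℕ), h1⟩ = v l := by
        congr 1; exact Fin.ext (by simp [hldef, Nat.mod_eq_of_lt h1])
      rw [hvl, show v k - (v l - 2 * π) = v k + 2 * π - v l from by ring]
      exact le_trans (min_le_right _ _) (min_le_right _ _)
    · rcases lt_or_ge (j : ℕ) (2 * K) with h2 | h2
      · rw [dif_neg (by omega), dif_pos h2]
        have hm : (j : ℕ) % K = (j : ℕ) - K := by
          rw [Nat.mod_eq_sub_mod h1, Nat.mod_eq_of_lt (by omega)]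
        have hvl : v ⟨(j : ℕ) - K, by omega⟩ = v l := by
          congr 1
          exact Fin.ext (by simp only [hldef, Fin.val_mk]; omega)
        rw [hvl]
        exact le_trans (min_le_right _ _) (min_le_left _ _)
      · rw [dif_neg (by omega), dif_neg (by omega)]
        have hm : (j : ℕ) % K = (j : ℕ) - 2 * K := by
          rw [Nat.mod_eq_sub_mod h1, Nat.mod_eq_sub_mod (by omega),
            Nat.mod_eq_of_lt (by omega)]
          omega
        have hvl : v ⟨(j : ℕ) - 2 * K, by omega⟩ = v l := by
          congr 1
          exact Fin.ext (by simp only [hldef, Fin.val_mk]; omega)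
        rw [hvl, show v k - (v l + 2 * π) = v k - 2 * π - v l from by ring]
        exact min_le_left _ _
  · apply Finset.le_inf'
    intro l _
    have hl := l.isLt
    have e0 : v' ⟨(l : ℕ), by omega⟩ = v l - 2 * π := by
      rw [hv', dif_pos (by simp only [Fin.val_mk]; omega)]
    have e1 : v' ⟨K + (l : ℕ), by omega⟩ = v l := by
      rw [hv', dif_neg (by simp only [Fin.val_mk]; omega), dif_pos (by simp only [Fin.val_mk]; omega)]
      congr 1; exact Fin.ext (by simp only [Fin.val_mk]; omega)
    have e2 : v' ⟨2 * K + (l : ℕ), by omega⟩ = v l + 2 * π := by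
      rw [hv', dif_neg (by simp only [Fin.val_mk]; omega), dif_neg (by simp only [Fin.val_mk]; omega)]
      congr 2
      exact Fin.ext (by simp only [Fin.val_mk]; omega)
    have b0 : B' ⟨(l : ℕ), by omega⟩ = B l := by
      rw [hB']; congr 1; exact Fin.ext (by simp [Nat.mod_eq_of_lt hl])
    have b1 : B' ⟨K + (l : ℕ), by omega⟩ = B l := by
      rw [hB']; congr 1
      exact Fin.ext (by simp [Nat.add_mod_left, Nat.mod_eq_of_lt hl])
    have b2 : B' ⟨2 * K + (l : ℕ), by omega⟩ = B l := by
      rw [hB']; congr 1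
      refine Fin.ext ?_
      simp only [Fin.val_mk]
      rw [show 2 * K + (l : ℕ) = (l : ℕ) + K * 2 from by ring, Nat.add_mul_mod_self_left,
        Nat.mod_eq_of_lt hl]
    rw [dCirc]
    rcases le_total (|v k - 2 * π - v l|) (min (|v k - v l|) (|v k + 2 * π - v l|)) with h | h
    · rw [min_eq_left h]
      refine le_trans (Finset.inf'_le _ (Finset.mem_univ ⟨2 * K + (l : ℕ), by omega⟩)) (le_of_eq ?_)
      rw [e2, b2, show v k - (v l + 2 * π) = v k - 2 * π - v l from by ring]
    · rw [min_eq_right h]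
      rcases le_total (|v k - v l|) (|v k + 2 * π - v l|) with h' | h'
      · rw [min_eq_left h']
        refine le_trans (Finset.inf'_le _ (Finset.mem_univ ⟨K + (l : ℕ), by omega⟩)) (le_of_eq ?_)
        rw [e1, b1]
      · rw [min_eq_right h']
        refine le_trans (Finset.inf'_le _ (Finset.mem_univ ⟨(l : ℕ), by omega⟩)) (le_of_eq ?_)
        rw [e0, b0, show v k - (v l - 2 * π) = v k + 2 * π - v l from by ring]
end

section
/- Let B ∈ ℝ^K, v ∈ ℝ^K (a list of distinct values), α > 0, and data y_1,…,y_N ∈ {v_1,…,v_K} with nonnegative weights w. Define tables B^1_k = w_1|v_k − y_1| and B^n_k = w_n|v_k − y_n| + min_l (B^{n−1}_l + α|v_k − v_l|) for n = 2,…,N. Then min_k B^N_k equals the minimum over x ∈ {v_1,…,v_K}^N of the energy α Σ_{n=1}^{N-1} |x_n − x_{n+1}| + Σ_{n=1}^N w_n |x_n − y_n|. -/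
open Finset

section Aux

variable {K : ℕ}

lemma my_inf'_add_const {ι : Type*} (s : Finset ι) (hs : s.Nonempty) (f : ι → ℝ) (c : ℝ) :
    s.inf' hs (fun i => f i + c) = s.inf' hs f + c := by
  apply le_antisymm
  · obtain ⟨i, hi, hif⟩ := Finset.exists_mem_eq_inf' hs f
    rw [hif]
    exact Finset.inf'_le _ hi
  · exact Finset.le_inf' _ _ fun i hi => add_le_add_left (Finset.inf'_le _ hi) c

lemma my_inf'_split (hK : 0 < K) (n : ℕ) (f : (Fin (n + 1) → Fin K) → ℝ) :
    Finset.univ.inf' (⟨fun _ => ⟨0, hK⟩, Finset.mem_univ _⟩ :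
        (Finset.univ : Finset (Fin (n + 1) → Fin K)).Nonempty) f =
      Finset.univ.inf' (⟨⟨0, hK⟩, Finset.mem_univ _⟩ :
          (Finset.univ : Finset (Fin K)).Nonempty) (fun k : Fin K =>
        Finset.univ.inf' (⟨fun _ => ⟨0, hK⟩, Finset.mem_univ _⟩ :
            (Finset.univ : Finset (Fin n → Fin K)).Nonempty)
          (fun h : Fin n → Fin K => f (Fin.snoc h k))) := by
  apply le_antisymm
  · apply Finset.le_inf'
    intro k _
    apply Finset.le_inf'
    intro h _
    exact Finset.inf'_le _ (Finset.mem_univ _)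
  · apply Finset.le_inf'
    intro g _
    refine le_trans (Finset.inf'_le _ (Finset.mem_univ (g (Fin.last n)))) ?_
    refine le_trans (Finset.inf'_le _ (Finset.mem_univ (Fin.init g))) ?_
    rw [Fin.snoc_init_self]

noncomputable def energy (v : Fin K → ℝ) (α : ℝ) (W Y : ℕ → ℝ) :
    (n : ℕ) → (Fin (n + 1) → Fin K) → ℝ
  | 0, g => W 0 * |v (g 0) - Y 0|
  | n + 1, g => energy v α W Y n (fun i => g i.castSucc) +
      α * |v (g (Fin.last (n + 1))) - v (g (Fin.last n).castSucc)| +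
      W (n + 1) * |v (g (Fin.last (n + 1))) - Y (n + 1)|

noncomputable def Ctab (hK : 0 < K) (v : Fin K → ℝ) (α : ℝ) (W Y : ℕ → ℝ) :
    ℕ → Fin K → ℝ
  | 0 => fun k => W 0 * |v k - Y 0|
  | n + 1 => fun k => W (n + 1) * |v k - Y (n + 1)| +
      Finset.univ.inf' ⟨⟨0, hK⟩, Finset.mem_univ _⟩
        (fun l => Ctab hK v α W Y n l + α * |v k - v l|)

lemma Ctab_eq (hK : 0 < K) (v : Fin K → ℝ) (α : ℝ) (W Y : ℕ → ℝ) (n : ℕ) (k : Fin K) :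
    Ctab hK v α W Y n k =
      Finset.univ.inf' (⟨fun _ => ⟨0, hK⟩, Finset.mem_univ _⟩ :
          (Finset.univ : Finset (Fin n → Fin K)).Nonempty)
        (fun h : Fin n → Fin K => energy v α W Y n (Fin.snoc h k)) := by
  induction n generalizing k with
  | zero =>
    rw [Ctab]
    have he : ∀ h : Fin 0 → Fin K, energy v α W Y 0 (Fin.snoc h k) = W 0 * |v k - Y 0| := by
      intro h
      simp [energy, Fin.snoc]
    simp only [he]
    symm
    apply Finset.inf'_const
  | succ n ih =>
    have hsnoc : ∀ (h' : Fin (n + 1) → Fin K),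
        energy v α W Y (n + 1) (Fin.snoc h' k) =
          (energy v α W Y n h' + α * |v k - v (h' (Fin.last n))|) +
            W (n + 1) * |v k - Y (n + 1)| := by
      intro h'
      rw [energy]
      simp only [Fin.snoc_castSucc, Fin.snoc_last]
    calc Ctab hK v α W Y (n + 1) k
        = W (n + 1) * |v k - Y (n + 1)| +
          Finset.univ.inf' ⟨⟨0, hK⟩, Finset.mem_univ _⟩
            (fun l => Ctab hK v α W Y n l + α * |v k - v l|) := rfl
      _ = W (n + 1) * |v k - Y (n + 1)| +
          Finset.univ.inf' ⟨⟨0, hK⟩, Finset.mem_univ _⟩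
            (fun l => Finset.univ.inf' (⟨fun _ => ⟨0, hK⟩, Finset.mem_univ _⟩ :
                (Finset.univ : Finset (Fin n → Fin K)).Nonempty)
              (fun h : Fin n → Fin K =>
                energy v α W Y n (Fin.snoc h l) + α * |v k - v l|)) := by
          congr 1
          refine Finset.inf'_congr _ rfl fun l _ => ?_
          rw [ih]; exact (my_inf'_add_const _ _ _ _).symm
      _ = W (n + 1) * |v k - Y (n + 1)| +
          Finset.univ.inf' (⟨fun _ => ⟨0, hK⟩, Finset.mem_univ _⟩ :
              (Finset.univ : Finset (Fin (n + 1) → Fin K)).Nonempty)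
            (fun h' : Fin (n + 1) → Fin K =>
              energy v α W Y n h' + α * |v k - v (h' (Fin.last n))|) := by
          congr 1
          rw [my_inf'_split hK n (fun h' : Fin (n + 1) → Fin K =>
            energy v α W Y n h' + α * |v k - v (h' (Fin.last n))|)]
          refine Finset.inf'_congr _ rfl fun l _ => ?_
          refine Finset.inf'_congr _ rfl fun h _ => ?_
          simp
      _ = _ := by
          rw [add_comm]
          refine (my_inf'_add_const Finset.univ _ (fun h' : Fin (n + 1) → Fin K =>
            energy v α W Y n h' + α * |v k - v (h' (Fin.last n))|) (W (n + 1) * |v k - Y (n + 1)|)).symm.trans ?_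
          refine Finset.inf'_congr _ rfl fun h' _ => ?_
          rw [hsnoc h']

lemma energy_sum (v : Fin K → ℝ) (α : ℝ) (W Y : ℕ → ℝ) (n : ℕ) (g : Fin (n + 1) → Fin K) :
    energy v α W Y n g =
      α * ∑ i : Fin n, |v (g i.castSucc) - v (g i.succ)| +
        ∑ i : Fin (n + 1), W i * |v (g i) - Y i| := by
  induction n with
  | zero => simp [energy]
  | succ n ih =>
    rw [energy, ih]
    rw [Fin.sum_univ_castSucc (f := fun i : Fin (n + 1) => |v (g i.castSucc) - v (g i.succ)|)]
    rw [Fin.sum_univ_castSucc (f := fun i : Fin (n + 2) => W i * |v (g i) - Y i|)]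
    simp only [Fin.coe_castSucc, Fin.val_last, Fin.succ_castSucc, Fin.succ_last]
    rw [abs_sub_comm (v (g (Fin.last (n + 1))))]
    ring

end Aux

/-- Correctness of the Viterbi tabulation for the discretized `L¹`-TV energy:
the minimum of the final table `B^N` equals the minimum of the energy
`α ∑ |x_n - x_{n+1}| + ∑ w_n |x_n - y_n|` over all sequences `x ∈ {v₁,…,v_K}^N`. -/
theorem viterbi_tabulation_l1tv_correct
    (K N : ℕ) (hK : 0 < K) (hN : 0 < N)
    (v : Fin K → ℝ) (hv : Function.Injective v)
    (y w : Fin N → ℝ) (hy : ∀ n, y n ∈ Set.range v) (hw : ∀ n, 0 ≤ w n)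
    (α : ℝ) (hα : 0 < α)
    (Btab : Fin N → Fin K → ℝ)
    (hB1 : ∀ k, Btab ⟨0, hN⟩ k = w ⟨0, hN⟩ * |v k - y ⟨0, hN⟩|)
    (hBn : ∀ (n : ℕ) (h : n + 1 < N) (k : Fin K),
      Btab ⟨n + 1, h⟩ k = w ⟨n + 1, h⟩ * |v k - y ⟨n + 1, h⟩| +
        Finset.univ.inf' ⟨⟨0, hK⟩, Finset.mem_univ _⟩
          (fun l => Btab ⟨n, by omega⟩ l + α * |v k - v l|)) :
    Finset.univ.inf' ⟨⟨0, hK⟩, Finset.mem_univ _⟩ (Btab ⟨N - 1, by omega⟩) =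
      Finset.univ.inf' ⟨fun _ => ⟨0, hK⟩, Finset.mem_univ _⟩
        (fun ξ : Fin N → Fin K =>
          α * ∑ i : Fin (N - 1),
              |v (ξ ⟨i, by have := i.isLt; omega⟩) - v (ξ ⟨(i : ℕ) + 1, by have := i.isLt; omega⟩)| +
            ∑ n, w n * |v (ξ n) - y n|) := by
  obtain ⟨M, rfl⟩ : ∃ M, N = M + 1 := ⟨N - 1, by omega⟩
  set W : ℕ → ℝ := fun n => if h : n < M + 1 then w ⟨n, h⟩ else 0 with hW
  set Y : ℕ → ℝ := fun n => if h : n < M + 1 then y ⟨n, h⟩ else 0 with hY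
  have hBtab : ∀ (n : ℕ) (hn : n < M + 1) (k : Fin K),
      Btab ⟨n, hn⟩ k = Ctab hK v α W Y n k := by
    intro n
    induction n with
    | zero =>
      intro hn k
      rw [hB1 k, Ctab]
      simp [hW, hY]
    | succ n ihn =>
      intro hn k
      rw [hBn n hn k, Ctab]
      have hWn : W (n + 1) = w ⟨n + 1, hn⟩ := by simp [hW, hn, show n < M by omega]
      have hYn : Y (n + 1) = y ⟨n + 1, hn⟩ := by simp [hY, hn, show n < M by omega]
      rw [hWn, hYn]
      congr 1
      refine Finset.inf'_congr _ rfl fun l _ => ?_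
      rw [ihn (by omega) l]
  have step1 : Finset.univ.inf' (⟨⟨0, hK⟩, Finset.mem_univ _⟩ :
        (Finset.univ : Finset (Fin K)).Nonempty) (Btab ⟨M + 1 - 1, by omega⟩) =
      Finset.univ.inf' ⟨⟨0, hK⟩, Finset.mem_univ _⟩ (fun k => Ctab hK v α W Y M k) := by
    refine Finset.inf'_congr _ rfl fun k _ => ?_
    show Btab ⟨M, by omega⟩ k = _
    exact hBtab M (by omega) k
  rw [step1]
  have step2 : Finset.univ.inf' (⟨⟨0, hK⟩, Finset.mem_univ _⟩ :
        (Finset.univ : Finset (Fin K)).Nonempty) (fun k => Ctab hK v α W Y M k) =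
      Finset.univ.inf' (⟨fun _ => ⟨0, hK⟩, Finset.mem_univ _⟩ :
          (Finset.univ : Finset (Fin (M + 1) → Fin K)).Nonempty) (energy v α W Y M) := by
    rw [my_inf'_split hK M (energy v α W Y M)]
    refine Finset.inf'_congr _ rfl fun k _ => ?_
    rw [Ctab_eq]
  rw [step2]
  refine Finset.inf'_congr _ rfl fun g _ => ?_
  show energy v α W Y M g =
    α * ∑ i : Fin M, |v (g i.castSucc) - v (g i.succ)| +
      ∑ n : Fin (M + 1), w n * |v (g n) - y n|
  rw [energy_sum]
  congr 1
  refine Finset.sum_congr rfl fun i _ => ?_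
  have : W (i : ℕ) = w i := by simp [hW, i.isLt, show ¬ M < (i : ℕ) from by have := i.isLt; omega]
  have hYi : Y (i : ℕ) = y i := by simp [hY, i.isLt, show ¬ M < (i : ℕ) from by have := i.isLt; omega]
  rw [this, hYi]
end
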